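/- Let r = [r_0, ..., r_m] and c = [c_0, ..., c_n] be strictly increasing sequences of natural numbers, and let {r̂, ĉ} be a maximal ordered sub-pair for {r, c} of length p+1. Then the rank of the matrix T_{r,c} with (i,j) entry C(c_j, r_i) is exactly p+1. -/

import Mathlib

open Finset

private lemma tele_sum (f : ℕ → ℚ) (N : ℕ) :
    ∑ t ∈ Finset.range (N+1), (f t - if t = 0 then 0 else f (t-1)) = f N := by
  induction N with
  | zero => simp
  | succ N ih => rw [Finset.sum_range_succ, ih]; simp

private lemma sum_fin_ite_tele (N : ℕ) (f : ℕ → ℚ) (i : Fin (N+1)) :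
    ∑ k : Fin (N+1), (if (k:ℕ) ≤ (i:ℕ) then (1:ℚ) else 0) *
      (f (k:ℕ) - if (k:ℕ) = 0 then 0 else f ((k:ℕ)-1)) = f (i:ℕ) := by
  rw [Fin.sum_univ_eq_sum_range
    (fun t => (if t ≤ (i:ℕ) then (1:ℚ) else 0) * (f t - if t = 0 then 0 else f (t-1)))]
  have h1 : ∀ t, (if t ≤ (i:ℕ) then (1:ℚ) else 0) * (f t - if t = 0 then 0 else f (t-1))
      = if t ≤ (i:ℕ) then (f t - if t = 0 then 0 else f (t-1)) else 0 := by
    intro t; split_ifs <;> ring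
  simp_rw [h1]
  rw [← Finset.sum_filter]
  have h2 : (Finset.range (N+1)).filter (· ≤ (i:ℕ)) = Finset.range ((i:ℕ)+1) := by
    ext t
    simp only [Finset.mem_filter, Finset.mem_range]
    have := i.isLt
    omega
  rw [h2, tele_sum]

private lemma choose_sub_eq_sum (k t₀ : ℕ) : ∀ t, t₀ ≤ t →
    ((t.choose (k+1) : ℚ) - (t₀.choose (k+1) : ℚ)) = ∑ s ∈ Finset.Ico t₀ t, (s.choose k : ℚ) := by
  intro t ht
  induction t, ht using Nat.le_induction with
  | base => simp
  | succ t ht ih =>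
      rw [Finset.sum_Ico_succ_top ht, ← ih, Nat.choose_succ_succ]
      push_cast
      ring

private lemma pascal_det_eq_zero (p : ℕ) (a b : ℕ → ℕ)
    (ha : ∀ ⦃i j : ℕ⦄, i ≤ j → j ≤ p → a i ≤ a j)
    (hb : ∀ ⦃i j : ℕ⦄, i ≤ j → j ≤ p → b i ≤ b j)
    (k : ℕ) (hk : k ≤ p) (hba : b k < a k) :
    (Matrix.of fun (i j : Fin (p+1)) => (((b (i:ℕ)).choose (a (j:ℕ))) : ℚ)).det = 0 := by
  rw [Matrix.det_apply]
  apply Finset.sum_eq_zero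
  intro σ _
  have key : ∃ j : Fin (p+1), k ≤ (j:ℕ) ∧ ((σ j : Fin (p+1)) : ℕ) ≤ k := by
    by_contra hcon
    push_neg at hcon
    set kk : Fin (p+1) := ⟨k, by omega⟩ with hkk
    have hmaps : ∀ j ∈ Finset.Ici kk, σ j ∈ Finset.Ioi kk := by
      intro j hj
      rw [Finset.mem_Ici] at hj
      rw [Finset.mem_Ioi]
      have h1 : k ≤ (j : ℕ) := hj
      have h2 := hcon j h1
      have h3 : (kk : ℕ) = k := rfl
      exact Fin.lt_def.2 (by omega)
    have hcard := Finset.card_le_card_of_injOn σ hmaps (σ.injective.injOn)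
    rw [Fin.card_Ici, Fin.card_Ioi] at hcard
    simp only [hkk] at hcard
    omega
  obtain ⟨j, hj1, hj2⟩ := key
  have hz : (b ((σ j : Fin (p+1)) : ℕ)).choose (a (j : ℕ)) = 0 := by
    apply Nat.choose_eq_zero_of_lt
    calc b ((σ j : Fin (p+1)) : ℕ) ≤ b k := hb hj2 hk
      _ < a k := hba
      _ ≤ a (j : ℕ) := ha hj1 (by have := j.isLt; omega)
  have hprod : (∏ i : Fin (p+1),
      Matrix.of (fun (i j : Fin (p+1)) => (((b (i:ℕ)).choose (a (j:ℕ))) : ℚ)) (σ i) i) = 0 :=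
    Finset.prod_eq_zero (Finset.mem_univ j) (by simp [hz])
  rw [hprod, smul_zero]

private lemma pascal_det_pos : ∀ (S p : ℕ) (a b : ℕ → ℕ),
    (∀ ⦃i j : ℕ⦄, i < j → j ≤ p → a i < a j) →
    (∀ ⦃i j : ℕ⦄, i < j → j ≤ p → b i < b j) →
    (∀ i ≤ p, a i ≤ b i) →
    (∑ i ∈ Finset.range (p+1), b i ≤ S) →
    0 < (Matrix.of fun (i j : Fin (p+1)) => (((b (i:ℕ)).choose (a (j:ℕ))) : ℚ)).det := by
  intro S
  induction S using Nat.strong_induction_on with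
  | _ S ih =>
  intro p a b ha hb hab hsum
  have haM : ∀ ⦃i j : ℕ⦄, i ≤ j → j ≤ p → a i ≤ a j := by
    intro i j hij hjp
    rcases eq_or_lt_of_le hij with h | h
    · exact h ▸ le_rfl
    · exact (ha h hjp).le
  have hbM : ∀ ⦃i j : ℕ⦄, i ≤ j → j ≤ p → b i ≤ b j := by
    intro i j hij hjp
    rcases eq_or_lt_of_le hij with h | h
    · exact h ▸ le_rfl
    · exact (hb h hjp).le
  cases p with
  | zero =>
      rw [Matrix.det_fin_one]
      simp only [Matrix.of_apply]
      exact_mod_cast Nat.choose_pos (hab 0 le_rfl)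
  | succ q =>
  show 0 < (Matrix.of fun (i j : Fin (q+2)) => (((b (i:ℕ)).choose (a (j:ℕ))) : ℚ)).det
  have hS1 : 1 ≤ S := by
    have h1 : b 0 < b 1 := hb (by omega) (by omega)
    have h2 : b 1 ≤ ∑ i ∈ Finset.range (q+1+1), b i :=
      Finset.single_le_sum (f := b) (fun i _ => Nat.zero_le _) (Finset.mem_range.2 (by omega))
    omega
  by_cases h0 : a 0 = 0
  · -- expansion branch
    set M₁ : Matrix (Fin (q+2)) (Fin (q+2)) ℚ := Matrix.of fun i j =>
      (((b (i:ℕ)).choose (a (j:ℕ))) : ℚ) -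
        (if (i:ℕ) = 0 then 0 else (((b ((i:ℕ)-1)).choose (a (j:ℕ))) : ℚ)) with hM₁
    set L : Matrix (Fin (q+2)) (Fin (q+2)) ℚ :=
      Matrix.of fun i k => if (k:ℕ) ≤ (i:ℕ) then (1:ℚ) else 0 with hL
    have hLM : L * M₁ = Matrix.of fun (i j : Fin (q+2)) => (((b (i:ℕ)).choose (a (j:ℕ))) : ℚ) := by
      ext i j
      rw [Matrix.mul_apply]
      exact sum_fin_ite_tele (q+1) (fun t => ((b t).choose (a (j:ℕ)) : ℚ)) i
    have hdetL : L.det = 1 := by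
      have htri : L.BlockTriangular OrderDual.toDual := by
        intro i j hij
        have h1 : i < j := hij
        have h2 : (i:ℕ) < (j:ℕ) := h1
        simp only [hL, Matrix.of_apply]
        rw [if_neg (by omega)]
      rw [Matrix.det_of_lowerTriangular L htri]
      simp [hL]
    have hdetM : (Matrix.of fun (i j : Fin (q+2)) => (((b (i:ℕ)).choose (a (j:ℕ))) : ℚ)).det
        = M₁.det := by
      rw [← hLM, Matrix.det_mul, hdetL, one_mul]
    have hcol : ∀ i : Fin (q+2), i ≠ 0 → M₁ i 0 = 0 := by
      intro i hi
      have hi' : (i:ℕ) ≠ 0 := fun h => hi (Fin.ext h)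
      simp only [hM₁, Matrix.of_apply]
      rw [if_neg hi']
      have hz : a ((0 : Fin (q+2)):ℕ) = 0 := by simpa using h0
      rw [hz]
      simp
    have hM₁00 : M₁ 0 0 = 1 := by
      simp [hM₁, h0]
    have hexp := Matrix.det_succ_column_zero (n := q+1) M₁
    have hdetM₁ : M₁.det = (M₁.submatrix Fin.succ Fin.succ).det := by
      rw [hexp, Finset.sum_eq_single (0 : Fin (q+2))]
      · rw [hM₁00]
        simp [Fin.succAbove_zero]
      · intro i _ hi
        rw [hcol i hi]
        ring
      · intro h; exact absurd (Finset.mem_univ _) h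
    set A : Fin (q+1) → Finset ℕ := fun i => Finset.Ico (b (i:ℕ)) (b ((i:ℕ)+1)) with hA
    set g : Fin (q+1) → ℕ → (Fin (q+1) → ℚ) :=
      fun _ s => (fun j => ((s.choose (a ((j:ℕ)+1) - 1)) : ℚ)) with hg
    have haPos1 : ∀ t : ℕ, t ≤ q → 1 ≤ a (t+1) := by
      intro t ht
      have := ha (show 0 < t+1 by omega) (by omega)
      omega
    have hrow : (M₁.submatrix Fin.succ Fin.succ) = fun i => ∑ s ∈ A i, g i s := by
      funext i j
      have h1 : (M₁.submatrix Fin.succ Fin.succ) i j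
          = (((b ((i:ℕ)+1)).choose (a ((j:ℕ)+1))) : ℚ) - (((b (i:ℕ)).choose (a ((j:ℕ)+1))) : ℚ) := by
        simp only [hM₁, Matrix.submatrix_apply, Matrix.of_apply, Fin.val_succ]
        rw [if_neg (by omega)]
        norm_num
      rw [h1, Finset.sum_apply]
      have h2 : a ((j:ℕ)+1) = (a ((j:ℕ)+1) - 1) + 1 := by
        have := haPos1 (j:ℕ) (by have := j.isLt; omega)
        omega
      have h3 : b (i:ℕ) ≤ b ((i:ℕ)+1) := (hb (by omega) (by have := i.isLt; omega)).le
      calc (((b ((i:ℕ)+1)).choose (a ((j:ℕ)+1))) : ℚ) - (((b (i:ℕ)).choose (a ((j:ℕ)+1))) : ℚ)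
          = (((b ((i:ℕ)+1)).choose ((a ((j:ℕ)+1) - 1) + 1)) : ℚ)
            - (((b (i:ℕ)).choose ((a ((j:ℕ)+1) - 1) + 1)) : ℚ) := by rw [← h2]
        _ = ∑ s ∈ Finset.Ico (b (i:ℕ)) (b ((i:ℕ)+1)), ((s.choose (a ((j:ℕ)+1) - 1)) : ℚ) :=
            choose_sub_eq_sum _ _ _ h3
        _ = ∑ s ∈ A i, g i s j := rfl
    have hdetM₂ : (M₁.submatrix Fin.succ Fin.succ).det
        = ∑ r ∈ Fintype.piFinset A, (Matrix.of fun i j => g i (r i) j).det := by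
      rw [show (M₁.submatrix Fin.succ Fin.succ).det
            = Matrix.detRowAlternating (M₁.submatrix Fin.succ Fin.succ) from rfl, hrow]
      exact (Matrix.detRowAlternating (R := ℚ) (n := Fin (q+1))).toMultilinearMap.map_sum_finset g A
    -- analysis of each term
    have hterm : ∀ r : Fin (q+1) → ℕ, (∀ i, r i ∈ A i) →
        ((∀ i : Fin (q+1), a ((i:ℕ)+1) - 1 ≤ r i) →
            0 < (Matrix.of fun i j => g i (r i) j).det)
          ∧ 0 ≤ (Matrix.of fun i j => g i (r i) j).det := by
      intro r hr
      have hrIco : ∀ i : Fin (q+1), b (i:ℕ) ≤ r i ∧ r i < b ((i:ℕ)+1) := by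
        intro i
        have := hr i
        rw [hA] at this
        exact Finset.mem_Ico.1 this
      set Fext : ℕ → ℕ := fun t => if h : t ≤ q then r ⟨t, by omega⟩ else r ⟨q, by omega⟩ + t
        with hFext
      have hFval : ∀ i : Fin (q+1), Fext (i:ℕ) = r i := by
        intro i
        simp only [hFext]
        rw [dif_pos (by have := i.isLt; omega : (i:ℕ) ≤ q)]
      have hMeq : (Matrix.of fun i j => g i (r i) j)
          = Matrix.of fun (i j : Fin (q+1)) =>
              (((Fext (i:ℕ)).choose ((fun t => a (t+1) - 1) (j:ℕ))) : ℚ) := by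
        ext i j
        simp only [hg, Matrix.of_apply, hFval]
      have hFstrict : ∀ ⦃i j : ℕ⦄, i < j → j ≤ q → Fext i < Fext j := by
        intro i j hij hjq
        have h1 : Fext i = r ⟨i, by omega⟩ := by
          simp only [hFext]; rw [dif_pos (by omega)]
        have h2 : Fext j = r ⟨j, by omega⟩ := by
          simp only [hFext]; rw [dif_pos (by omega)]
        have h3 := (hrIco ⟨i, by omega⟩).2
        have h4 := (hrIco ⟨j, by omega⟩).1
        have h5 : b (i+1) ≤ b j := hbM (by omega) (by omega)
        simp only at h3 h4
        omega
      have ha'strict : ∀ ⦃i j : ℕ⦄, i < j → j ≤ q → a (i+1) - 1 < a (j+1) - 1 := by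
        intro i j hij hjq
        have h1 := ha (show i+1 < j+1 by omega) (by omega)
        have h2 := haPos1 i (by omega)
        omega
      have hpos : (∀ i : Fin (q+1), a ((i:ℕ)+1) - 1 ≤ r i) →
          0 < (Matrix.of fun i j => g i (r i) j).det := by
        intro hord
        rw [hMeq]
        have hFle : ∀ t ≤ q, Fext t + 1 ≤ b (t+1) := by
          intro t ht
          have h1 := (hrIco ⟨t, by omega⟩).2
          have h2 : Fext t = r ⟨t, by omega⟩ := by
            simp only [hFext]; rw [dif_pos (by omega)]
          simp only at h1
          omega
        have hsum1 : ∑ t ∈ Finset.range (q+1), (Fext t + 1) ≤ ∑ t ∈ Finset.range (q+1), b (t+1) :=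
          Finset.sum_le_sum (fun t ht => hFle t (by have := Finset.mem_range.1 ht; omega))
        have hsum1' : ∑ t ∈ Finset.range (q+1), (Fext t + 1)
            = (∑ t ∈ Finset.range (q+1), Fext t) + (q+1) := by
          rw [Finset.sum_add_distrib, Finset.sum_const, Finset.card_range, smul_eq_mul, mul_one]
        have hsum2 : (∑ t ∈ Finset.range (q+1), b (t+1)) + b 0
            = ∑ t ∈ Finset.range (q+1+1), b t := (Finset.sum_range_succ' b (q+1)).symm
        refine ih (S-1) (by omega) q (fun t => a (t+1) - 1) Fext ha'strict hFstrict ?_ ?_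
        · intro i hi
          show a (i+1) - 1 ≤ Fext i
          have h1 := hord ⟨i, by omega⟩
          have h2 : Fext i = r ⟨i, by omega⟩ := by
            simp only [hFext]; rw [dif_pos (by omega)]
          simp only at h1
          omega
        · omega
      refine ⟨hpos, ?_⟩
      by_cases hord : ∀ i : Fin (q+1), a ((i:ℕ)+1) - 1 ≤ r i
      · exact (hpos hord).le
      · push_neg at hord
        obtain ⟨t, ht⟩ := hord
        rw [hMeq]
        have hz := pascal_det_eq_zero q (fun t => a (t+1) - 1) Fext
          (fun i j hij hjq => by
            show a (i+1) - 1 ≤ a (j+1) - 1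
            have := haM (show i+1 ≤ j+1 by omega) (show j+1 ≤ q+1 by omega); omega)
          (fun i j hij hjq => by
            rcases eq_or_lt_of_le hij with h | h
            · exact h ▸ le_rfl
            · exact (hFstrict h hjq).le)
          (t:ℕ) (by have := t.isLt; omega)
          (by show Fext (t:ℕ) < a ((t:ℕ)+1) - 1
              rw [hFval t]; exact ht)
        rw [hz]
    -- put it together
    rw [hdetM, hdetM₁, hdetM₂]
    apply Finset.sum_pos'
    · intro r hr
      exact (hterm r (fun i => Fintype.mem_piFinset.1 hr i)).2
    · refine ⟨fun i => max (b (i:ℕ)) (a ((i:ℕ)+1) - 1), ?_, ?_⟩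
      · apply Fintype.mem_piFinset.2
        intro i
        rw [hA]
        refine Finset.mem_Ico.2 ⟨le_max_left _ _, ?_⟩
        have h1 : b (i:ℕ) < b ((i:ℕ)+1) := hb (by omega) (by have := i.isLt; omega)
        have h2 : a ((i:ℕ)+1) ≤ b ((i:ℕ)+1) := hab _ (by have := i.isLt; omega)
        omega
      · refine (hterm _ ?_).1 (fun i => le_max_right _ _)
        intro i
        rw [hA]
        refine Finset.mem_Ico.2 ⟨le_max_left _ _, ?_⟩
        have h1 : b (i:ℕ) < b ((i:ℕ)+1) := hb (by omega) (by have := i.isLt; omega)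
        have h2 : a ((i:ℕ)+1) ≤ b ((i:ℕ)+1) := hab _ (by have := i.isLt; omega)
        omega
  · -- reduction branch
    have ha0 : 1 ≤ a 0 := Nat.pos_of_ne_zero h0
    have haPos : ∀ i ≤ q+1, 1 ≤ a i := fun i hi => le_trans ha0 (haM (Nat.zero_le i) hi)
    have hbPos : ∀ i ≤ q+1, 1 ≤ b i := fun i hi => le_trans (haPos i hi) (hab i hi)
    set M' : Matrix (Fin (q+2)) (Fin (q+2)) ℚ :=
      Matrix.of fun i j => ((((b (i:ℕ)) - 1).choose ((a (j:ℕ)) - 1)) : ℚ) with hM'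
    set w : Fin (q+2) → ℚ := fun j => ((a (j:ℕ) : ℚ))⁻¹ with hw
    set v : Fin (q+2) → ℚ := fun i => (b (i:ℕ) : ℚ) with hv
    have hkey : ∀ (i j : Fin (q+2)), (((b (i:ℕ)).choose (a (j:ℕ))) : ℚ)
        = v i * (w j * M' i j) := by
      intro i j
      have hia : 1 ≤ a (j:ℕ) := haPos _ (by have := j.isLt; omega)
      have hib : 1 ≤ b (i:ℕ) := hbPos _ (by have := i.isLt; omega)
      have hnat := Nat.add_one_mul_choose_eq (b (i:ℕ) - 1) (a (j:ℕ) - 1)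
      rw [Nat.sub_add_cancel hib, Nat.sub_add_cancel hia] at hnat
      have hq : (b (i:ℕ) : ℚ) * (((b (i:ℕ) - 1).choose (a (j:ℕ) - 1)) : ℚ)
          = (((b (i:ℕ)).choose (a (j:ℕ))) : ℚ) * (a (j:ℕ) : ℚ) := by
        exact_mod_cast congrArg (fun x : ℕ => (x : ℚ)) hnat
      have hane : (a (j:ℕ) : ℚ) ≠ 0 := Nat.cast_ne_zero.2 (by omega)
      simp only [hv, hw, hM', Matrix.of_apply]
      field_simp
      linear_combination -hq
    have hMeq : (Matrix.of fun (i j : Fin (q+2)) => (((b (i:ℕ)).choose (a (j:ℕ))) : ℚ))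
        = Matrix.of fun i j => v i * ((Matrix.of fun i j => w j * M' i j) i j) := by
      ext i j
      simp only [Matrix.of_apply]
      exact hkey i j
    rw [hMeq, Matrix.det_mul_column, Matrix.det_mul_row]
    have hdet' : 0 < M'.det := by
      refine ih (S-1) (by omega) (q+1) (fun t => a t - 1) (fun t => b t - 1) ?_ ?_ ?_ ?_
      · intro i j hij hjq
        show a i - 1 < a j - 1
        have h1 := ha hij hjq
        have h2 := haPos i (by omega)
        omega
      · intro i j hij hjq
        show b i - 1 < b j - 1
        have h1 := hb hij hjq
        have h2 := hbPos i (by omega)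
        omega
      · intro i hi
        show a i - 1 ≤ b i - 1
        have := hab i hi
        omega
      · have h1 : ∑ i ∈ Finset.range (q+1+1), (b i - 1 + 1) = ∑ i ∈ Finset.range (q+1+1), b i := by
          apply Finset.sum_congr rfl
          intro i hi
          have := hbPos i (by have := Finset.mem_range.1 hi; omega)
          omega
        have h2 : ∑ i ∈ Finset.range (q+1+1), (b i - 1 + 1)
            = (∑ i ∈ Finset.range (q+1+1), (b i - 1)) + (q+1+1) := by
          rw [Finset.sum_add_distrib, Finset.sum_const, Finset.card_range, smul_eq_mul, mul_one]
        show ∑ i ∈ Finset.range (q+1+1), (b i - 1) ≤ S - 1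
        omega
    apply mul_pos
    · apply Finset.prod_pos
      intro i _
      simp only [hv]
      have h1 := hbPos (i:ℕ) (by have := i.isLt; omega)
      have h2 : 0 < b (i:ℕ) := by omega
      exact_mod_cast h2
    apply mul_pos
    · apply Finset.prod_pos
      intro j _
      simp only [hw]
      have h1 := haPos (j:ℕ) (by have := j.isLt; omega)
      have h2 : 0 < a (j:ℕ) := by omega
      have h3 : (0:ℚ) < (a (j:ℕ) : ℚ) := by exact_mod_cast h2
      exact inv_pos.2 h3
    exact hdet'

private lemma matrix_rank_add_le' {m n : Type*} [Fintype m] [Fintype n]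
    (A B : Matrix m n ℚ) : (A + B).rank ≤ A.rank + B.rank := by
  rw [Matrix.rank, Matrix.rank, Matrix.rank]
  have h : LinearMap.range (A + B).mulVecLin
      ≤ LinearMap.range A.mulVecLin ⊔ LinearMap.range B.mulVecLin := by
    rintro x ⟨v, rfl⟩
    rw [Matrix.mulVecLin_add]
    exact Submodule.mem_sup.2 ⟨A.mulVecLin v, LinearMap.mem_range_self _ v,
      B.mulVecLin v, LinearMap.mem_range_self _ v, rfl⟩
  calc Module.finrank ℚ (LinearMap.range (A+B).mulVecLin)
      ≤ Module.finrank ℚ ↥(LinearMap.range A.mulVecLin ⊔ LinearMap.range B.mulVecLin) :=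
        Submodule.finrank_mono h
    _ ≤ _ := Submodule.finrank_add_le_finrank_add_finrank _ _



/-- The submatrix of the Pascal upper-triangular matrix with rows
`r 0, …, r m` and columns `c 0, …, c n`: its `(i,j)` entry is the binomial
coefficient `C(c j, r i)` (which is `0` when `r i > c j`). -/
def pascalSub (r c : ℕ → ℕ) (m n : ℕ) : Matrix (Fin (m + 1)) (Fin (n + 1)) ℚ :=
  Matrix.of fun i j => ((c (j : ℕ)).choose (r (i : ℕ)) : ℚ)

/-- `{r ∘ α, c ∘ β}` (restricted to indices `0, …, p`) is an ordered sub-pair of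
length `p + 1` for the pair of finite sequences `[r 0, …, r m]`, `[c 0, …, c n]`:
`α` and `β` are strictly increasing selections of indices (so `r ∘ α` is a
subsequence of `[r 0, …, r m]` and `c ∘ β` is a subsequence of `[c 0, …, c n]`)
and `r (α i) ≤ c (β i)` for all `i = 0, …, p`. -/
def OrderedSubPair (r c : ℕ → ℕ) (m n p : ℕ) (α β : ℕ → ℕ) : Prop :=
  StrictMonoOn α (Set.Iic p) ∧ StrictMonoOn β (Set.Iic p) ∧
    α p ≤ m ∧ β p ≤ n ∧ ∀ i ≤ p, r (α i) ≤ c (β i)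

/-- If `{r ∘ α, c ∘ β}` is a maximal ordered sub-pair of length `p + 1` for
`{[r 0, …, r m], [c 0, …, c n]}` (no ordered sub-pair has greater length), then
the Pascal submatrix `T_{r,c}` has rank exactly `p + 1`. -/
theorem pascal_rank_eq_of_maximal_orderedSubPair
    (m n p : ℕ) (r c α β : ℕ → ℕ) (hr : StrictMono r) (hc : StrictMono c)
    (hsub : OrderedSubPair r c m n p α β)
    (hmax : ∀ (q : ℕ) (α' β' : ℕ → ℕ), OrderedSubPair r c m n q α' β' → q ≤ p) :
    (pascalSub r c m n).rank = p + 1 := by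
  obtain ⟨hα, hβ, hαm, hβn, hord⟩ := hsub
  set P := pascalSub r c m n with hP
  have hαmono : ∀ ⦃i j : ℕ⦄, i ≤ j → j ≤ p → α i ≤ α j := by
    intro i j hij hjp
    rcases eq_or_lt_of_le hij with h | h
    · exact h ▸ le_rfl
    · exact (hα (Set.mem_Iic.2 (by omega)) (Set.mem_Iic.2 hjp) h).le
  have hβmono : ∀ ⦃i j : ℕ⦄, i ≤ j → j ≤ p → β i ≤ β j := by
    intro i j hij hjp
    rcases eq_or_lt_of_le hij with h | h
    · exact h ▸ le_rfl
    · exact (hβ (Set.mem_Iic.2 (by omega)) (Set.mem_Iic.2 hjp) h).le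
  have hαle : ∀ i : Fin (p+1), α (i:ℕ) ≤ m :=
    fun i => le_trans (hαmono (by have := i.isLt; omega) le_rfl) hαm
  have hβle : ∀ j : Fin (p+1), β (j:ℕ) ≤ n :=
    fun j => le_trans (hβmono (by have := j.isLt; omega) le_rfl) hβn
  apply le_antisymm
  · -- upper bound
    rcases le_or_gt m p with hm | hm
    · refine le_trans (Matrix.rank_le_card_height P) ?_
      rw [Fintype.card_fin]
      omega
    rcases le_or_gt n p with hn | hn
    · refine le_trans (Matrix.rank_le_card_width P) ?_
      rw [Fintype.card_fin]
      omega
    have hex : ∃ k ≤ p+1, c (n - (p+1) + k) < r k := by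
      by_contra hcon
      push_neg at hcon
      have hOSP : OrderedSubPair r c m n (p+1) id (fun k => n - (p+1) + k) := by
        refine ⟨fun x _ y _ hxy => hxy, fun x _ y _ hxy => by simp only; omega,
          by simpa using (by omega : p + 1 ≤ m), by simp only; omega,
          fun i hi => hcon i hi⟩
      have := hmax _ _ _ hOSP
      omega
    obtain ⟨k₀, hk₀, hbad⟩ := hex
    set j₀ := n - (p+1) + k₀ with hj₀
    have hj₀n : j₀ ≤ n := by omega
    set A : Matrix (Fin (m+1)) (Fin (n+1)) ℚ :=
      Matrix.of fun i j => if (i:ℕ) < k₀ then P i j else 0 with hA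
    set B : Matrix (Fin (m+1)) (Fin (n+1)) ℚ :=
      Matrix.of fun i j => if (i:ℕ) < k₀ then 0 else P i j with hB
    have hPAB : P = A + B := by
      ext i j
      simp only [Matrix.add_apply, hA, hB, Matrix.of_apply]
      split_ifs <;> ring
    have hrankA : A.rank ≤ k₀ := by
      set E : Matrix (Fin (m+1)) (Fin k₀) ℚ :=
        Matrix.of fun i t => if (i:ℕ) = (t:ℕ) then 1 else 0 with hEdef
      set F : Matrix (Fin k₀) (Fin (n+1)) ℚ :=
        Matrix.of fun t j => P ⟨(t:ℕ), by have := t.isLt; omega⟩ j with hFdef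
      have hAEF : A = E * F := by
        ext i j
        rw [Matrix.mul_apply]
        by_cases hi : (i:ℕ) < k₀
        · rw [Finset.sum_eq_single (⟨(i:ℕ), hi⟩ : Fin k₀)]
          · simp [hA, hEdef, hFdef, hi]
          · intro u _ hu
            have hne : (i:ℕ) ≠ (u:ℕ) := by
              intro h; exact hu (Fin.ext h.symm)
            simp [hEdef, hne]
          · intro h; exact absurd (Finset.mem_univ _) h
        · rw [Finset.sum_eq_zero, hA]
          · simp [hi]
          · intro u _
            have hne : (i:ℕ) ≠ (u:ℕ) := by have := u.isLt; omega
            simp [hEdef, hne]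
      rw [hAEF]
      refine le_trans (Matrix.rank_mul_le_right E F) ?_
      refine le_trans (Matrix.rank_le_card_height F) ?_
      simp
    have hrankB : B.rank ≤ p + 1 - k₀ := by
      set G : Matrix (Fin (m+1)) (Fin (p+1-k₀)) ℚ :=
        Matrix.of fun i t => B i ⟨j₀ + 1 + (t:ℕ), by have := t.isLt; omega⟩ with hGdef
      set H : Matrix (Fin (p+1-k₀)) (Fin (n+1)) ℚ :=
        Matrix.of fun t j => if (j:ℕ) = j₀ + 1 + (t:ℕ) then 1 else 0 with hHdef
      have hBGH : B = G * H := by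
        ext i j
        rw [Matrix.mul_apply]
        by_cases hj : j₀ + 1 ≤ (j:ℕ)
        · have hjlt : (j:ℕ) - (j₀+1) < p + 1 - k₀ := by have := j.isLt; omega
          rw [Finset.sum_eq_single (⟨(j:ℕ) - (j₀+1), hjlt⟩ : Fin (p+1-k₀))]
          · simp only [hGdef, hHdef, Matrix.of_apply]
            rw [if_pos (show (j:ℕ) = j₀ + 1 + ((j:ℕ) - (j₀+1)) by omega), mul_one]
            congr 1
            exact Fin.ext (show (j:ℕ) = j₀ + 1 + ((j:ℕ) - (j₀+1)) by omega)
          · intro u _ hu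
            have hne : (j:ℕ) ≠ j₀ + 1 + (u:ℕ) := by
              intro h
              exact hu (Fin.ext (show ((u:ℕ)) = (j:ℕ) - (j₀+1) by omega))
            simp [hHdef, hne]
          · intro h; exact absurd (Finset.mem_univ _) h
        · have hBz : B i j = 0 := by
            simp only [hB, Matrix.of_apply]
            split_ifs with hik
            · rfl
            · simp only [hP, pascalSub, Matrix.of_apply]
              have h1 : c (j:ℕ) ≤ c j₀ := hc.monotone (by omega)
              have h2 : r k₀ ≤ r (i:ℕ) := hr.monotone (by omega)
              have h3 : (c (j:ℕ)).choose (r (i:ℕ)) = 0 :=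
                Nat.choose_eq_zero_of_lt (by omega)
              exact_mod_cast h3
          rw [hBz]
          symm
          apply Finset.sum_eq_zero
          intro u _
          have hne : (j:ℕ) ≠ j₀ + 1 + (u:ℕ) := by omega
          simp [hHdef, hne]
      rw [hBGH]
      refine le_trans (Matrix.rank_mul_le_left G H) ?_
      refine le_trans (Matrix.rank_le_card_width G) ?_
      simp
    calc P.rank = (A + B).rank := by rw [← hPAB]
      _ ≤ A.rank + B.rank := matrix_rank_add_le' A B
      _ ≤ k₀ + (p + 1 - k₀) := add_le_add hrankA hrankB
      _ = p + 1 := by omega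
  · -- lower bound
    set RS : Matrix (Fin (p+1)) (Fin (m+1)) ℚ :=
      Matrix.of fun i t => if (t:ℕ) = α (i:ℕ) then 1 else 0 with hRS
    set CS : Matrix (Fin (n+1)) (Fin (p+1)) ℚ :=
      Matrix.of fun t j => if (t:ℕ) = β (j:ℕ) then 1 else 0 with hCS
    have hRSP : ∀ (i : Fin (p+1)) (t : Fin (n+1)),
        (RS * P) i t = ((c (t:ℕ)).choose (r (α (i:ℕ))) : ℚ) := by
      intro i t
      rw [Matrix.mul_apply]
      rw [Finset.sum_eq_single (⟨α (i:ℕ), by have := hαle i; omega⟩ : Fin (m+1))]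
      · simp [hRS, hP, pascalSub]
      · intro u _ hu
        have hne : (u:ℕ) ≠ α (i:ℕ) := by
          intro h; exact hu (Fin.ext (by simpa using h))
        simp [hRS, hne]
      · intro h; exact absurd (Finset.mem_univ _) h
    have hE : RS * P * CS
        = Matrix.of fun (i j : Fin (p+1)) => (((c (β (j:ℕ))).choose (r (α (i:ℕ)))) : ℚ) := by
      ext i j
      rw [Matrix.mul_apply]
      calc ∑ t, (RS * P) i t * CS t j
          = ∑ t : Fin (n+1), ((c (t:ℕ)).choose (r (α (i:ℕ))) : ℚ) * CS t j :=
            Finset.sum_congr rfl (fun t _ => by rw [hRSP])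
        _ = _ := by
            rw [Finset.sum_eq_single (⟨β (j:ℕ), by have := hβle j; omega⟩ : Fin (n+1))]
            · simp [hCS]
            · intro u _ hu
              have hne : (u:ℕ) ≠ β (j:ℕ) := by
                intro h; exact hu (Fin.ext (by simpa using h))
              simp [hCS, hne]
            · intro h; exact absurd (Finset.mem_univ _) h
    have hdetpos : 0 < (Matrix.of fun (i j : Fin (p+1)) =>
        ((((fun t => c (β t)) (i:ℕ)).choose ((fun t => r (α t)) (j:ℕ))) : ℚ)).det := by
      refine pascal_det_pos (∑ i ∈ Finset.range (p+1), c (β i)) p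
        (fun t => r (α t)) (fun t => c (β t)) ?_ ?_ ?_ le_rfl
      · intro i j hij hjp
        exact hr (hα (Set.mem_Iic.2 (by omega)) (Set.mem_Iic.2 hjp) hij)
      · intro i j hij hjp
        exact hc (hβ (Set.mem_Iic.2 (by omega)) (Set.mem_Iic.2 hjp) hij)
      · exact hord
    have hdetE : (RS * P * CS).det ≠ 0 := by
      have ht : Matrix.transpose (RS * P * CS) = Matrix.of fun (i j : Fin (p+1)) =>
          ((((fun t => c (β t)) (i:ℕ)).choose ((fun t => r (α t)) (j:ℕ))) : ℚ) := by
        rw [hE]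
        ext i j
        rfl
      rw [← Matrix.det_transpose, ht]
      exact ne_of_gt hdetpos
    have hunit : IsUnit (RS * P * CS) :=
      (Matrix.isUnit_iff_isUnit_det _).2 (isUnit_iff_ne_zero.2 hdetE)
    have hrankE : (RS * P * CS).rank = p + 1 := by
      rw [Matrix.rank_of_isUnit _ hunit, Fintype.card_fin]
    calc p + 1 = (RS * P * CS).rank := hrankE.symm
      _ ≤ (RS * P).rank := Matrix.rank_mul_le_left (RS * P) CS
      _ ≤ P.rank := Matrix.rank_mul_le_right RS P
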